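/- arXiv:1512.01937 — 10 statements merged into one kernel-verified Lean document; each statement's English description precedes it below -/
import Mathlib

section
/- Let X be a topological space, (U_i : i ∈ I) a locally finite family of cozero subsets of X, and (F_i : i ∈ I) a family of zero subsets of X with F_i ⊆ U_i for every i ∈ I. Then the union F = ⋃_{i∈I} F_i is a zero set in X. -/
open Set Filter Topology

def IsZeroSet {X : Type*} [TopologicalSpace X] (A : Set X) : Prop :=
  ∃ f : X → ℝ, Continuous f ∧ A = f ⁻¹' {0}

def IsCozeroSet {X : Type*} [TopologicalSpace X] (A : Set X) : Prop := IsZeroSet Aᶜ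

def IsDiscreteFamily {X : Type*} [TopologicalSpace X] {ι : Type*} (U : ι → Set X) : Prop :=
  ∀ x : X, ∃ V ∈ 𝓝 x, {i | (U i ∩ V).Nonempty}.Subsingleton

def IsSFDFamily {X : Type*} [TopologicalSpace X] {ι : Type*} (A : ι → Set X) : Prop :=
  ∃ U : ι → Set X, IsDiscreteFamily U ∧ (∀ i, IsCozeroSet (U i)) ∧ ∀ i, closure (A i) ⊆ U i

def IsSFDSetFamily {X : Type*} [TopologicalSpace X] (𝓐 : Set (Set X)) : Prop :=
  IsSFDFamily (fun A : 𝓐 => (A : Set X))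

def IsBaseFor {X Y : Type*} [TopologicalSpace X] [TopologicalSpace Y]
    (𝓑 : Set (Set X)) (f : X → Y) : Prop :=
  ∀ V : Set Y, IsOpen V → ∃ 𝓢 ⊆ 𝓑, f ⁻¹' V = ⋃₀ 𝓢

def FunctionallyFSigma {X : Type*} [TopologicalSpace X] (A : Set X) : Prop :=
  ∃ F : ℕ → Set X, (∀ n, IsZeroSet (F n)) ∧ A = ⋃ n, F n

def MemK1 {X Y : Type*} [TopologicalSpace X] [TopologicalSpace Y] (f : X → Y) : Prop :=
  ∀ V : Set Y, IsOpen V → FunctionallyFSigma (f ⁻¹' V)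

def MemB1 {X Y : Type*} [TopologicalSpace X] [TopologicalSpace Y] (f : X → Y) : Prop :=
  ∃ g : ℕ → X → Y, (∀ n, Continuous (g n)) ∧
    ∀ x, Tendsto (fun n => g n x) atTop (𝓝 (f x))

def MemSigmaF {X Y : Type*} [TopologicalSpace X] [TopologicalSpace Y] (f : X → Y) : Prop :=
  ∃ 𝓑 : ℕ → Set (Set X), (∀ n, IsSFDSetFamily (𝓑 n)) ∧ IsBaseFor (⋃ n, 𝓑 n) f

def MemSigmaF0 {X Y : Type*} [TopologicalSpace X] [TopologicalSpace Y] (f : X → Y) : Prop :=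
  ∃ 𝓑 : ℕ → Set (Set X), (∀ n, IsSFDSetFamily (𝓑 n)) ∧
    (∀ n, ∀ A ∈ 𝓑 n, IsZeroSet A) ∧ IsBaseFor (⋃ n, 𝓑 n) f

def CompletelySeparatedSets {X : Type*} [TopologicalSpace X] (A B : Set X) : Prop :=
  ∃ h : X → ℝ, Continuous h ∧ (∀ x, h x ∈ Icc (0:ℝ) 1) ∧
    (∀ x ∈ A, h x = 0) ∧ ∀ x ∈ B, h x = 1

def StronglyZeroDimensional (X : Type*) [TopologicalSpace X] : Prop :=
  ∀ A B : Set X, CompletelySeparatedSets A B → ∃ U : Set X, IsClopen U ∧ A ⊆ U ∧ U ⊆ Bᶜ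

def IsCSet {X : Type*} [TopologicalSpace X] (A : Set X) : Prop :=
  ∃ U : ℕ → Set X, (∀ n, IsClopen (U n)) ∧ A = ⋂ n, U n

def IsCSigmaSet {X : Type*} [TopologicalSpace X] (A : Set X) : Prop :=
  ∃ C : ℕ → Set X, (∀ n, IsCSet (C n)) ∧ A = ⋃ n, C n

def AlmostStronglyZeroDimensional (X : Type*) [TopologicalSpace X] : Prop :=
  ∀ A : Set X, IsZeroSet A → IsCSigmaSet A

def CountablyCompactIn {X : Type*} [TopologicalSpace X] (F : Set X) : Prop :=
  ∀ U : ℕ → Set X, (∀ n, IsOpen (U n)) → F ⊆ ⋃ n, U n →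
    ∃ s : Finset ℕ, F ⊆ ⋃ n ∈ s, U n

theorem stmt0 {X : Type*} [TopologicalSpace X] {ι : Type*} (U F : ι → Set X)
    (hU : LocallyFinite U) (hUc : ∀ i, IsCozeroSet (U i))
    (hF : ∀ i, IsZeroSet (F i)) (hFU : ∀ i, F i ⊆ U i) :
    IsZeroSet (⋃ i, F i) := by
  choose f hf hFf using hF
  choose g hg hUg using hUc
  have hden : ∀ i x, 0 < (f i x)^2 + (g i x)^2 := by
    intro i x
    rcases eq_or_ne (f i x) 0 with hfx | hfx
    · have hxF : x ∈ F i := by rw [hFf i]; exact hfx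
      have hxU : x ∈ U i := hFU i hxF
      have hgx : g i x ≠ 0 := by
        intro h
        have : x ∈ (U i)ᶜ := by rw [hUg i]; exact h
        exact this hxU
      positivity
    · positivity
  set p : ι → X → ℝ := fun i x => (f i x)^2 / ((f i x)^2 + (g i x)^2) with hp
  have hpc : ∀ i, Continuous (p i) := fun i =>
    (((hf i).pow 2).div (((hf i).pow 2).add ((hg i).pow 2)) fun x => (hden i x).ne')
  have hp0 : ∀ i x, p i x = 0 ↔ f i x = 0 := by
    intro i x
    rw [hp]
    simp only [div_eq_zero_iff, (hden i x).ne', or_false, sq_eq_zero_iff]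
  have hp1 : ∀ i x, x ∉ U i → p i x = 1 := by
    intro i x hx
    have hgx : g i x = 0 := by
      have : x ∈ (U i)ᶜ := hx
      rw [hUg i] at this; exact this
    have hfx : f i x ≠ 0 := by
      intro h
      exact hx (hFU i (by rw [hFf i]; exact h))
    simp [hp, hgx, div_self (pow_ne_zero 2 hfx)]
  have hsupp : ∀ i, Function.mulSupport (p i) ⊆ U i := by
    intro i x hx
    by_contra h
    exact hx (hp1 i x h)
  have hptfin : ∀ x, (Function.mulSupport fun i => p i x).Finite := by
    intro x
    refine (hU.point_finite x).subset fun i hi => ?_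
    by_contra h
    exact hi (hp1 i x h)
  refine ⟨fun x => ∏ᶠ i, p i x, continuous_finprod hpc (hU.subset hsupp), ?_⟩
  ext x
  simp only [mem_iUnion, mem_preimage, mem_singleton_iff]
  constructor
  · rintro ⟨i, hi⟩
    exact finprod_eq_zero (fun i => p i x) i ((hp0 i x).2 ((hFf i ▸ hi : x ∈ _))) (hptfin x)
  · intro h
    by_contra hc
    push_neg at hc
    rw [finprod_eq_prod _ (hptfin x)] at h
    rcases Finset.prod_eq_zero_iff.1 h with ⟨i, _, hi⟩
    exact hc i (by rw [hFf i]; exact mem_singleton_iff.2 ((hp0 i x).1 hi))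
end

section
/- A union of a strongly functionally discrete family of zero sets in a topological space is a zero set. -/
open Set Filter Topology

theorem stmt1 {X : Type*} [TopologicalSpace X] {ι : Type*} (F : ι → Set X)
    (hsfd : IsSFDFamily F) (hF : ∀ i, IsZeroSet (F i)) :
    IsZeroSet (⋃ i, F i) := by
  obtain ⟨U, hdisc, hcoz, hcl⟩ := hsfd
  rcases isEmpty_or_nonempty ι with hι | hι
  · refine ⟨fun _ => 1, continuous_const, ?_⟩
    simp
  · choose f hfc hfz using hF
    choose u huc huz using hcoz
    set g : ι → X → ℝ := fun i x => |f i x| with hg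
    set v : ι → X → ℝ := fun i x => |u i x| with hv
    have hgz : ∀ i x, g i x = 0 ↔ x ∈ F i := by
      intro i x
      simp only [hg, abs_eq_zero]
      rw [hfz i]; rfl
    have hvz : ∀ i x, v i x = 0 ↔ x ∉ U i := by
      intro i x
      simp only [hv, abs_eq_zero]
      constructor
      · intro h hU
        have : x ∈ (U i)ᶜ := by rw [huz i]; exact h
        exact this hU
      · intro h
        have : x ∈ (u i) ⁻¹' {0} := by rw [← huz i]; exact h
        exact this
    have hspos : ∀ i x, 0 < g i x + v i x := by
      intro i x
      rcases lt_or_eq_of_le (abs_nonneg (f i x)) with h | h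
      · have : 0 ≤ v i x := abs_nonneg _
        linarith [h]
      · have hx : x ∈ F i := (hgz i x).1 h.symm
        have hxU : x ∈ U i := hcl i (subset_closure hx)
        have : v i x ≠ 0 := fun hv0 => (hvz i x).1 hv0 hxU
        have : 0 < v i x := lt_of_le_of_ne (abs_nonneg _) (Ne.symm this)
        have : 0 ≤ g i x := abs_nonneg _
        linarith
    set h : ι → X → ℝ := fun i x => g i x / (g i x + v i x) with hh
    have hhc : ∀ i, Continuous (h i) := by
      intro i
      exact ((hfc i).abs).div (((hfc i).abs).add ((huc i).abs))
        (fun x => (hspos i x).ne')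
    have hh0 : ∀ i x, 0 ≤ h i x :=
      fun i x => div_nonneg (abs_nonneg _) (hspos i x).le
    have hh1 : ∀ i x, h i x ≤ 1 := by
      intro i x
      rw [div_le_one (hspos i x)]
      have := abs_nonneg (u i x)
      simp only [hh, hg, hv]
      linarith
    have hhzero : ∀ i x, h i x = 0 ↔ x ∈ F i := by
      intro i x
      rw [div_eq_zero_iff]
      constructor
      · rintro (h0 | h0)
        · exact (hgz i x).1 h0
        · exact absurd h0 (hspos i x).ne'
      · intro hx; exact Or.inl ((hgz i x).2 hx)
    have hhone : ∀ i x, x ∉ U i → h i x = 1 := by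
      intro i x hx
      have hv0 : v i x = 0 := (hvz i x).2 hx
      have hg0 : g i x ≠ 0 := by
        intro h0
        exact absurd (hspos i x) (by rw [h0, hv0]; simp)
      rw [hh]; simp only [hv0, add_zero]
      exact div_self hg0
    set φ : X → ℝ := fun x => ⨅ i, h i x with hφ
    have hbdd : ∀ x, BddBelow (Set.range fun i => h i x) := by
      intro x
      exact ⟨0, fun y ⟨i, hi⟩ => hi ▸ hh0 i x⟩
    have hφ0 : ∀ x, 0 ≤ φ x := fun x => le_ciInf (fun i => hh0 i x)
    -- value of φ when all but possibly i are 1 on a point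
    have hval : ∀ (i : ι) (y : X), (∀ j, j ≠ i → h j y = 1) → φ y = h i y := by
      intro i y hj
      refine le_antisymm (ciInf_le (hbdd y) i) (le_ciInf fun j => ?_)
      by_cases hji : j = i
      · subst hji; exact le_rfl
      · rw [hj j hji]; exact hh1 i y
    have hval1 : ∀ (y : X), (∀ j, h j y = 1) → φ y = 1 := by
      intro y hj
      refine le_antisymm ?_ (le_ciInf fun j => (hj j).ge)
      calc φ y ≤ h hι.some y := ciInf_le (hbdd y) _
        _ = 1 := hj _
    -- local description
    have hloc : ∀ x : X, ∃ V : Set X, V ∈ 𝓝 x ∧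
        ((∀ y ∈ V, φ y = 1) ∨ ∃ i, ∀ y ∈ V, φ y = h i y) := by
      intro x
      obtain ⟨V, hV, hsub⟩ := hdisc x
      refine ⟨V, hV, ?_⟩
      by_cases hS : ∃ i, (U i ∩ V).Nonempty
      · obtain ⟨i, hi⟩ := hS
        refine Or.inr ⟨i, fun y hy => hval i y fun j hji => ?_⟩
        apply hhone
        intro hyU
        exact hji (hsub ⟨y, hyU, hy⟩ hi)
      · push_neg at hS
        refine Or.inl fun y hy => hval1 y fun j => ?_
        apply hhone
        intro hyU
        exact (Set.eq_empty_iff_forall_notMem.1 (hS j)) y ⟨hyU, hy⟩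
    have hφc : Continuous φ := by
      rw [continuous_iff_continuousAt]
      intro x
      obtain ⟨V, hV, hc⟩ := hloc x
      rcases hc with hc | ⟨i, hc⟩
      · exact continuousAt_const.congr
          (Filter.eventuallyEq_of_mem hV fun y hy => (hc y hy).symm) |>.congr
          (by exact Filter.eventuallyEq_of_mem hV fun y hy => rfl)
      · exact ((hhc i).continuousAt).congr
          (Filter.eventuallyEq_of_mem hV fun y hy => (hc y hy).symm)
    refine ⟨φ, hφc, ?_⟩
    ext x
    simp only [Set.mem_iUnion, Set.mem_preimage, Set.mem_singleton_iff]
    constructor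
    · rintro ⟨i, hx⟩
      refine le_antisymm ?_ (hφ0 x)
      calc φ x ≤ h i x := ciInf_le (hbdd x) i
        _ = 0 := (hhzero i x).2 hx
    · intro hx
      obtain ⟨V, hV, hc⟩ := hloc x
      have hxV : x ∈ V := mem_of_mem_nhds hV
      rcases hc with hc | ⟨i, hc⟩
      · exact absurd ((hc x hxV).symm.trans hx) one_ne_zero
      · exact ⟨i, (hhzero i x).1 ((hc x hxV).symm.trans hx)⟩
end

section
/- Let X be a topological space and let C₁ and C₂ be disjoint C-subsets of X. Then there exists a clopen set G in X such that C₁ ⊆ G ⊆ X \ C₂. -/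
open Set Filter Topology

theorem stmt2 {X : Type*} [TopologicalSpace X] (C₁ C₂ : Set X)
    (h1 : IsCSet C₁) (h2 : IsCSet C₂) (hd : Disjoint C₁ C₂) :
    ∃ G : Set X, IsClopen G ∧ C₁ ⊆ G ∧ G ⊆ C₂ᶜ := by
  obtain ⟨U, hU, hC1⟩ := h1
  obtain ⟨V, hV, hC2⟩ := h2
  set W : ℕ → Set X := fun n => ⋂ k ∈ Finset.range n, U k with hWdef
  set Z : ℕ → Set X := fun n => ⋂ k ∈ Finset.range (n+1), V k with hZdef
  have hWmem : ∀ n x, x ∈ W n ↔ ∀ k < n, x ∈ U k := by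
    intro n x; simp [hWdef]
  have hZmem : ∀ n x, x ∈ Z n ↔ ∀ k ≤ n, x ∈ V k := by
    intro n x; simp [hZdef, Nat.lt_succ_iff]
  have hWclopen : ∀ n, IsClopen (W n) := fun n =>
    isClopen_biInter_finset fun k _ => hU k
  have hZclopen : ∀ n, IsClopen (Z n) := fun n =>
    isClopen_biInter_finset fun k _ => hV k
  have hC1W : ∀ x, x ∈ C₁ ↔ ∀ n, x ∈ W n := by
    intro x
    rw [hC1]
    simp only [Set.mem_iInter, hWmem]
    constructor
    · intro h n k _; exact h k
    · intro h k; exact h (k+1) k (Nat.lt_succ_self k)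
  have hC2Z : ∀ x, x ∈ C₂ ↔ ∀ n, x ∈ Z n := by
    intro x
    rw [hC2]
    simp only [Set.mem_iInter, hZmem]
    constructor
    · intro h n k _; exact h k
    · intro h k; exact h k k le_rfl
  refine ⟨⋃ n, W n \ Z n, ⟨?_, ?_⟩, ?_, ?_⟩
  · -- closed: complement is the open set ⋃ n, Z n \ W (n+1)
    have hcompl : (⋃ n, W n \ Z n)ᶜ = ⋃ n, Z n \ W (n+1) := by
      ext x
      simp only [Set.mem_compl_iff, Set.mem_iUnion, Set.mem_diff, not_exists, not_and,
        not_not]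
      constructor
      · intro h
        by_contra hH
        push_neg at hH
        have key : ∀ n, x ∈ W n ∧ x ∈ Z n := by
          intro n
          induction n with
          | zero =>
            have hw0 : x ∈ W 0 := by rw [hWmem]; intro k hk; omega
            exact ⟨hw0, h 0 hw0⟩
          | succ n ih =>
            have hw : x ∈ W (n+1) := hH n ih.2
            exact ⟨hw, h (n+1) hw⟩
        have hx1 : x ∈ C₁ := (hC1W x).2 fun n => (key n).1
        have hx2 : x ∈ C₂ := (hC2Z x).2 fun n => (key n).2
        exact hd.ne_of_mem hx1 hx2 rfl
      · rintro ⟨m, hzm, hwm⟩ n hwn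
        rcases le_or_gt n m with hnm | hmn
        · -- Z m ⊆ Z n
          rw [hZmem] at hzm ⊢
          intro k hk; exact hzm k (hk.trans hnm)
        · -- W n ⊆ W (m+1), contradiction with hwm
          exfalso
          apply hwm
          rw [hWmem] at hwn ⊢
          intro k hk; exact hwn k (by omega)
    rw [← isOpen_compl_iff, hcompl]
    exact isOpen_iUnion fun n => ((hZclopen n).isOpen).sdiff (hWclopen (n+1)).isClosed
  · exact isOpen_iUnion fun n => ((hWclopen n).isOpen).sdiff (hZclopen n).isClosed
  · -- C₁ ⊆ G
    intro x hx
    have hxW : ∀ n, x ∈ W n := (hC1W x).1 hx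
    have hxnC2 : x ∉ C₂ := fun h => hd.ne_of_mem hx h rfl
    rw [hC2Z] at hxnC2
    push_neg at hxnC2
    obtain ⟨n, hn⟩ := hxnC2
    exact Set.mem_iUnion.2 ⟨n, hxW n, hn⟩
  · -- G ⊆ C₂ᶜ
    intro x hx hx2
    obtain ⟨n, hxw, hxz⟩ := Set.mem_iUnion.1 hx
    exact hxz ((hC2Z x).1 hx2 n)
end

section
/- Let X be a topological space and C₁, …, C_n pairwise disjoint C-subsets of X. Then there exist pairwise disjoint clopen sets G₁, …, G_n in X such that X = G₁ ∪ ⋯ ∪ G_n and C_i ⊆ G_i for every i = 1, …, n. -/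
open Set Filter Topology

lemma csep {X : Type*} [TopologicalSpace X] {C D : Set X} (hC : IsCSet C) (hD : IsCSet D)
    (h : Disjoint C D) : ∃ G : Set X, IsClopen G ∧ C ⊆ G ∧ D ⊆ Gᶜ := by
  classical
  obtain ⟨U, hU, rfl⟩ := hC
  obtain ⟨V, hV, rfl⟩ := hD
  set U' : ℕ → Set X := fun n => ⋂ k ∈ Finset.range (n+1), U k with hU'def
  set V' : ℕ → Set X := fun n => ⋂ k ∈ Finset.range (n+1), V k with hV'def
  have hU' : ∀ n, IsClopen (U' n) := fun n => isClopen_biInter_finset (fun k _ => hU k)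
  have hV' : ∀ n, IsClopen (V' n) := fun n => isClopen_biInter_finset (fun k _ => hV k)
  have hUm : ∀ {m n : ℕ}, m ≤ n → U' n ⊆ U' m := by
    intro m n hmn
    exact Set.biInter_subset_biInter_left (fun k hk => Finset.mem_range.2
      (lt_of_lt_of_le (Finset.mem_range.1 hk) (by omega)))
  have hVm : ∀ {m n : ℕ}, m ≤ n → V' n ⊆ V' m := by
    intro m n hmn
    exact Set.biInter_subset_biInter_left (fun k hk => Finset.mem_range.2
      (lt_of_lt_of_le (Finset.mem_range.1 hk) (by omega)))
  have hUmem : ∀ x, (∀ n, x ∈ U' n) ↔ x ∈ ⋂ n, U n := by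
    intro x
    simp only [hU'def, Set.mem_iInter, Finset.mem_range]
    constructor
    · intro hx n; exact hx n n (by omega)
    · intro hx n k _; exact hx k
  have hVmem : ∀ x, (∀ n, x ∈ V' n) ↔ x ∈ ⋂ n, V n := by
    intro x
    simp only [hV'def, Set.mem_iInter, Finset.mem_range]
    constructor
    · intro hx n; exact hx n n (by omega)
    · intro hx n k _; exact hx k
  refine ⟨⋃ n, U' n ∩ (V' n)ᶜ, ⟨?_, ?_⟩, ?_, ?_⟩
  · -- closed : complement is open
    have hcompl : (⋃ n, U' n ∩ (V' n)ᶜ)ᶜ =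
        (U' 0)ᶜ ∪ ⋃ n, ((U' (n+1))ᶜ ∩ (U' n ∩ V' n)) := by
      ext x
      simp only [Set.mem_compl_iff, Set.mem_iUnion, Set.mem_inter_iff, Set.mem_union,
        not_exists, not_and, not_not]
      constructor
      · intro hx
        by_cases hall : ∀ n, x ∈ U' n
        · exfalso
          have hxC : x ∈ ⋂ n, U n := (hUmem x).1 hall
          have hxD : x ∈ ⋂ n, V n := (hVmem x).1 (fun n => hx n (hall n))
          exact h.ne_of_mem hxC hxD rfl
        · push_neg at hall
          obtain ⟨m, hm⟩ := hall
          have hex : ∃ m, x ∉ U' m := ⟨m, hm⟩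
          rcases Nat.lt_or_ge (Nat.find hex) 1 with h0 | h1
          · left
            have : Nat.find hex = 0 := by omega
            rw [← this]; exact Nat.find_spec hex
          · right
            obtain ⟨k, hk⟩ : ∃ k, Nat.find hex = k + 1 := ⟨Nat.find hex - 1, by omega⟩
            refine ⟨k, by rw [← hk]; exact Nat.find_spec hex, ?_, ?_⟩
            · exact not_not.1 (Nat.find_min hex (by omega))
            · exact hx k (not_not.1 (Nat.find_min hex (by omega)))
      · rintro (hx | ⟨m, hm1, hm2, hm3⟩)
        · intro n hn; exact absurd (hUm (Nat.zero_le n) hn) hx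
        · intro n hn
          rcases Nat.lt_or_ge n (m+1) with hnm | hnm
          · exact hVm (by omega) hm3
          · exact absurd (hUm hnm hn) hm1
    rw [← isOpen_compl_iff, hcompl]
    exact ((hU' 0).compl.isOpen).union (isOpen_iUnion fun n =>
      ((hU' (n+1)).compl.isOpen).inter ((hU' n).inter (hV' n)).isOpen)
  · exact isOpen_iUnion fun n => (hU' n).isOpen.inter (hV' n).compl.isOpen
  · intro x hx
    have hxU : ∀ n, x ∈ U' n := (hUmem x).2 hx
    have hxD : x ∉ ⋂ n, V n := fun hxD => h.ne_of_mem hx hxD rfl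
    have : ∃ n, x ∉ V' n := by
      by_contra hc; push_neg at hc; exact hxD ((hVmem x).1 hc)
    obtain ⟨n, hn⟩ := this
    exact Set.mem_iUnion.2 ⟨n, hxU n, hn⟩
  · intro x hx
    have hxV : ∀ n, x ∈ V' n := (hVmem x).2 hx
    simp only [Set.mem_compl_iff, Set.mem_iUnion, not_exists, Set.mem_inter_iff, not_and, not_not]
    intro n _; exact hxV n

theorem stmt3 {X : Type*} [TopologicalSpace X] (n : ℕ) (hn : 0 < n) (C : Fin n → Set X)
    (hC : ∀ i, IsCSet (C i)) (hd : Pairwise (Function.onFun Disjoint C)) :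
    ∃ G : Fin n → Set X, (∀ i, IsClopen (G i)) ∧ Pairwise (Function.onFun Disjoint G) ∧
      (⋃ i, G i) = Set.univ ∧ ∀ i, C i ⊆ G i := by
  classical
  -- choose separating clopen sets for each ordered pair
  have key : ∀ i j : Fin n, i < j → ∃ T : Set X, IsClopen T ∧ C i ⊆ T ∧ C j ⊆ Tᶜ := by
    intro i j hij
    exact csep (hC i) (hC j) (hd hij.ne)
  choose T hTclopen hTi hTj using key
  -- antisymmetric separating family
  set S : Fin n → Fin n → Set X := fun i j =>
    if h : i < j then T i j h else if h' : j < i then (T j i h')ᶜ else Set.univ with hS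
  have hSclopen : ∀ i j, IsClopen (S i j) := by
    intro i j
    simp only [hS]
    split
    · exact hTclopen _ _ _
    · split
      · exact (hTclopen _ _ _).compl
      · exact isClopen_univ
  have hSsub : ∀ i j, C i ⊆ S i j := by
    intro i j
    simp only [hS]
    split
    · exact hTi _ _ _
    · split
      · exact hTj _ _ _
      · exact Set.subset_univ _
  have hScompl : ∀ i j, i < j → S j i = (S i j)ᶜ := by
    intro i j hij
    simp only [hS, dif_pos hij, dif_neg (lt_asymm hij), dif_pos hij]
  set H : Fin n → Set X := fun i => ⋂ j, S i j with hH
  have hHclopen : ∀ i, IsClopen (H i) := fun i => isClopen_iInter_of_finite (hSclopen i)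
  have hHsub : ∀ i, C i ⊆ H i := fun i => Set.subset_iInter (hSsub i)
  have hHdisj : Pairwise (Function.onFun Disjoint H) := by
    intro i j hij
    rcases lt_or_gt_of_ne hij with hlt | hlt
    · refine Set.disjoint_left.2 fun x hxi hxj => ?_
      have h1 : x ∈ S i j := Set.mem_iInter.1 hxi j
      have h2 : x ∈ S j i := Set.mem_iInter.1 hxj i
      rw [hScompl i j hlt] at h2
      exact h2 h1
    · refine Set.disjoint_left.2 fun x hxi hxj => ?_
      have h1 : x ∈ S j i := Set.mem_iInter.1 hxj i
      have h2 : x ∈ S i j := Set.mem_iInter.1 hxi j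
      rw [hScompl j i hlt] at h2
      exact h2 h1
  set i0 : Fin n := ⟨0, hn⟩ with hi0
  set K : Set X := ⋃ j : {j : Fin n // j ≠ i0}, H j with hK
  have hKclopen : IsClopen K := isClopen_iUnion_of_finite fun j => hHclopen j
  refine ⟨fun i => if i = i0 then Kᶜ else H i, ?_, ?_, ?_, ?_⟩
  · intro i
    dsimp only
    split
    · exact hKclopen.compl
    · exact hHclopen i
  · intro i j hij
    have hHK : ∀ l : Fin n, l ≠ i0 → H l ⊆ K := fun l hl =>
      Set.subset_iUnion (fun j : {j : Fin n // j ≠ i0} => H (j : Fin n)) ⟨l, hl⟩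
    dsimp only [Function.onFun]
    by_cases hi : i = i0 <;> by_cases hj : j = i0
    · exact absurd (hi.trans hj.symm) hij
    · rw [if_pos hi, if_neg hj]
      exact Set.disjoint_left.2 fun x hx hxj => hx (hHK j hj hxj)
    · rw [if_neg hi, if_pos hj]
      exact Set.disjoint_right.2 fun x hx hxi => hx (hHK i hi hxi)
    · rw [if_neg hi, if_neg hj]
      exact hHdisj hij
  · ext x
    simp only [Set.mem_iUnion, Set.mem_univ, iff_true]
    by_cases hx : x ∈ K
    · obtain ⟨⟨j, hj⟩, hxj⟩ := Set.mem_iUnion.1 hx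
      exact ⟨j, by rw [if_neg hj]; exact hxj⟩
    · exact ⟨i0, by rw [if_pos rfl]; exact hx⟩
  · intro i x hx
    dsimp only
    by_cases hi : i = i0
    · rw [if_pos hi]
      intro hxK
      obtain ⟨⟨j, hj⟩, hxj⟩ := Set.mem_iUnion.1 hxK
      have hxi : x ∈ H i := hHsub i hx
      rw [hi] at hxi
      exact Set.disjoint_left.1 (hHdisj (Ne.symm hj)) hxi hxj
    · rw [if_neg hi]
      exact hHsub i hx
end

section
/- Every almost strongly zero-dimensional completely regular (Tychonoff) space X is totally separated, i.e., any two distinct points of X can be separated by a clopen set. -/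
open Set Filter Topology

theorem stmt4 {X : Type*} [TopologicalSpace X] [CompletelyRegularSpace X] [T1Space X]
    (h : AlmostStronglyZeroDimensional X) :
    ∀ x y : X, x ≠ y → ∃ G : Set X, IsClopen G ∧ x ∈ G ∧ y ∉ G := by
  intro x y hxy
  obtain ⟨f, hf, hfx, hfy⟩ := CompletelyRegularSpace.completely_regular x {y}
    isClosed_singleton (by simpa using hxy)
  set g : X → ℝ := fun z => (f z : ℝ) with hg
  have hz : IsZeroSet (g ⁻¹' {0}) := ⟨g, continuous_subtype_val.comp hf, rfl⟩
  obtain ⟨C, hC, hCeq⟩ := h _ hz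
  have hxmem : x ∈ g ⁻¹' {0} := by simp [hg, hfx]
  rw [hCeq] at hxmem
  obtain ⟨_, ⟨n, rfl⟩, hxn⟩ := hxmem
  obtain ⟨U, hU, hUeq⟩ := hC n
  have hymem : y ∉ C n := by
    intro hy
    have : y ∈ g ⁻¹' {0} := hCeq ▸ mem_iUnion.2 ⟨n, hy⟩
    have h1 : f y = 1 := hfy rfl
    simp only [mem_preimage, mem_singleton_iff, hg] at this
    rw [h1] at this
    norm_num at this
  simp only [] at hxn
  rw [hUeq] at hxn hymem
  simp only [mem_iInter, not_forall] at hymem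
  obtain ⟨m, hm⟩ := hymem
  exact ⟨U m, hU m, mem_iInter.1 hxn m, hm⟩
end

section
/- Let X be a topological space, F ⊆ X a countably compact C_σ-set, and C ⊆ X a C-set with F ∩ C = ∅. Then there exists a clopen set G in X such that F ⊆ G ⊆ X \ C. -/
open Set Filter Topology

theorem stmt5 {X : Type*} [TopologicalSpace X] (F C : Set X)
    (hF : IsCSigmaSet F) (hFc : CountablyCompactIn F) (hC : IsCSet C)
    (hd : F ∩ C = ∅) :
    ∃ G : Set X, IsClopen G ∧ F ⊆ G ∧ G ⊆ Cᶜ := by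
  obtain ⟨U, hU, rfl⟩ := hC
  have hcov : F ⊆ ⋃ n, (U n)ᶜ := by
    intro x hx
    by_contra h
    simp only [mem_iUnion, mem_compl_iff, not_exists, not_not] at h
    have : x ∈ F ∩ ⋂ n, U n := ⟨hx, mem_iInter.2 h⟩
    rw [hd] at this
    exact this
  obtain ⟨s, hs⟩ := hFc (fun n => (U n)ᶜ) (fun n => (hU n).1.isOpen_compl) hcov
  refine ⟨⋃ n ∈ s, (U n)ᶜ, ?_, hs, ?_⟩
  · exact isClopen_biUnion_finset fun n _ => (hU n).compl
  · intro x hx hxC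
    simp only [mem_iUnion, mem_compl_iff] at hx
    obtain ⟨n, -, hn⟩ := hx
    exact hn (mem_iInter.1 hxC n)
end

section
/- Let X be a topological space and F, E ⊆ X disjoint countably compact C_σ-sets. Then there exists a clopen set G in X such that F ⊆ G ⊆ X \ E. -/
open Set Filter Topology

theorem stmt6 {X : Type*} [TopologicalSpace X] (F E : Set X)
    (hF : IsCSigmaSet F) (hFc : CountablyCompactIn F)
    (hE : IsCSigmaSet E) (hEc : CountablyCompactIn E)
    (hd : Disjoint F E) :
    ∃ G : Set X, IsClopen G ∧ F ⊆ G ∧ G ⊆ Eᶜ := by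
  obtain ⟨C, hCset, hFeq⟩ := hF
  have key : ∀ n, ∃ V : Set X, IsClopen V ∧ C n ⊆ V ∧ V ⊆ Eᶜ := by
    intro n
    obtain ⟨U, hU, hCU⟩ := hCset n
    have hEcover : E ⊆ ⋃ m, (U m)ᶜ := by
      intro x hx
      by_contra h
      simp only [mem_iUnion, mem_compl_iff, not_exists, not_not] at h
      have hxC : x ∈ C n := by rw [hCU]; exact mem_iInter.2 h
      exact absurd hx (disjoint_left.1 hd (hFeq ▸ mem_iUnion.2 ⟨n, hxC⟩))
    obtain ⟨s, hs⟩ := hEc (fun m => (U m)ᶜ) (fun m => (hU m).compl.isOpen) hEcover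
    refine ⟨⋂ m ∈ s, U m, isClopen_biInter_finset fun m _ => hU m, ?_, ?_⟩
    · rw [hCU]; exact fun x hx => mem_iInter₂.2 fun m _ => mem_iInter.1 hx m
    · intro x hx hxE
      obtain ⟨m, hm, hxm⟩ := mem_iUnion₂.1 (hs hxE)
      exact hxm (mem_iInter₂.1 hx m hm)
  choose V hVcl hCV hVE using key
  have hFcov : F ⊆ ⋃ n, V n := hFeq ▸ iUnion_mono hCV
  obtain ⟨s, hs⟩ := hFc V (fun n => (hVcl n).isOpen) hFcov
  exact ⟨⋃ n ∈ s, V n, isClopen_biUnion_finset fun n _ => hVcl n, hs,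
    iUnion₂_subset fun n _ => hVE n⟩
end

section
/- Let X be a countably compact topological space. Then X is almost strongly zero-dimensional if and only if X is strongly zero-dimensional. -/
open Set Filter Topology

private lemma ccIn_closed {X : Type*} [TopologicalSpace X]
    (hX : CountablyCompactIn (Set.univ : Set X)) {F : Set X} (hF : IsClosed F) :
    CountablyCompactIn F := by
  intro U hU hFU
  obtain ⟨s, hs⟩ := hX (fun n => U n ∪ Fᶜ) (fun n => (hU n).union hF.isOpen_compl)
    (by intro x _
        by_cases hx : x ∈ F
        · obtain ⟨_, ⟨n, rfl⟩, hn⟩ := hFU hx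
          exact mem_iUnion.2 ⟨n, Or.inl hn⟩
        · exact mem_iUnion.2 ⟨0, Or.inr hx⟩)
  refine ⟨s, fun x hx => ?_⟩
  obtain ⟨n, hn, hxn⟩ := mem_iUnion₂.1 (hs (mem_univ x))
  rcases hxn with h | h
  · exact mem_iUnion₂.2 ⟨n, hn, h⟩
  · exact absurd hx h

private lemma clopen_of_CSet {X : Type*} [TopologicalSpace X]
    (hX : CountablyCompactIn (Set.univ : Set X)) {C O : Set X}
    (hC : IsCSet C) (hO : IsOpen O) (hCO : C ⊆ O) :
    ∃ V : Set X, IsClopen V ∧ C ⊆ V ∧ V ⊆ O := by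
  obtain ⟨U, hU, rfl⟩ := hC
  set W : ℕ → Set X := fun n => Nat.rec O (fun m _ => (U m)ᶜ) n with hW
  have hWopen : ∀ n, IsOpen (W n) := by
    intro n
    cases n with
    | zero => exact hO
    | succ m => exact (hU m).compl.isOpen
  have hcov : (Set.univ : Set X) ⊆ ⋃ n, W n := by
    intro x _
    by_cases hx : x ∈ ⋂ n, U n
    · exact mem_iUnion.2 ⟨0, hCO hx⟩
    · obtain ⟨m, hm⟩ := not_forall.1 (by simpa [mem_iInter] using hx)
      exact mem_iUnion.2 ⟨m + 1, hm⟩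
  obtain ⟨s, hs⟩ := hX W hWopen hcov
  set N := s.sup id with hN
  refine ⟨⋂ m ∈ Finset.range N, U m, isClopen_biInter_finset (fun m _ => hU m), ?_, ?_⟩
  · intro x hx
    exact mem_iInter₂.2 fun m _ => (mem_iInter.1 hx m)
  · intro x hx
    obtain ⟨n, hn, hxn⟩ := mem_iUnion₂.1 (hs (mem_univ x))
    cases n with
    | zero => exact hxn
    | succ m =>
      exfalso
      have hmN : m < N := lt_of_lt_of_le (Nat.lt_succ_self m) (Finset.le_sup (f := id) hn)
      exact hxn (mem_iInter₂.1 hx m (Finset.mem_range.2 hmN))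

theorem stmt7 {X : Type*} [TopologicalSpace X]
    (hX : CountablyCompactIn (Set.univ : Set X)) :
    AlmostStronglyZeroDimensional X ↔ StronglyZeroDimensional X := by
  constructor
  · -- AZD → SZD
    rintro hAZ A B ⟨h, hc, hmem, hA0, hB1⟩
    set Z : Set X := h ⁻¹' {0} with hZdef
    have hZzero : IsZeroSet Z := ⟨h, hc, rfl⟩
    obtain ⟨C, hCset, hZeq⟩ := hAZ Z hZzero
    set O : Set X := h ⁻¹' (Set.Iio (1/2 : ℝ)) with hOdef
    have hOopen : IsOpen O := isOpen_Iio.preimage hc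
    have hZO : Z ⊆ O := by
      intro x hx
      have : h x = 0 := hx
      simp only [hOdef, mem_preimage, mem_Iio, this]
      norm_num
    have hCO : ∀ n, C n ⊆ O := by
      intro n
      refine subset_trans ?_ hZO
      rw [hZeq]
      exact subset_iUnion C n
    choose V hVclopen hCV hVO using fun n => clopen_of_CSet hX (hCset n) hOopen (hCO n)
    have hZclosed : IsClosed Z := isClosed_singleton.preimage hc
    have hZcc : CountablyCompactIn Z := ccIn_closed hX hZclosed
    obtain ⟨s, hs⟩ := hZcc V (fun n => (hVclopen n).isOpen)
      (by rw [hZeq]; exact iUnion_mono hCV)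
    refine ⟨⋃ n ∈ s, V n, isClopen_biUnion_finset (fun n _ => hVclopen n), ?_, ?_⟩
    · intro x hx
      exact hs (by simpa [hZdef] using hA0 x hx)
    · intro x hx hxB
      obtain ⟨n, _, hxn⟩ := mem_iUnion₂.1 hx
      have h1 : h x = 1 := hB1 x hxB
      have h2 : h x < 1/2 := hVO n hxn
      rw [h1] at h2
      norm_num at h2
  · -- SZD → AZD
    rintro hS A ⟨f, hf, hAeq⟩
    have key : ∀ n : ℕ, ∃ U : Set X, IsClopen U ∧ A ⊆ U ∧
        U ⊆ {x | (1 : ℝ)/(n+1) ≤ |f x|}ᶜ := by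
      intro n
      apply hS
      refine ⟨fun x => min ((n+1) * |f x|) 1, ?_, ?_, ?_, ?_⟩
      · exact (continuous_const.mul (continuous_abs.comp hf)).min continuous_const
      · intro x
        constructor
        · exact le_min (mul_nonneg (by positivity) (abs_nonneg _)) zero_le_one
        · exact min_le_right _ _
      · intro x hx
        have : f x = 0 := by rw [hAeq] at hx; exact hx
        simp [this]
      · intro x hx
        have hpos : (0:ℝ) < n + 1 := by positivity
        have hx' : (1:ℝ)/(n+1) ≤ |f x| := hx
        have : (1:ℝ) ≤ (n+1) * |f x| := by
          rw [div_le_iff₀ hpos] at hx'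
          linarith [hx']
        exact min_eq_right this
    choose U hUclopen hAU hUB using key
    have hAeqI : A = ⋂ n, U n := by
      apply Subset.antisymm
      · exact subset_iInter hAU
      · intro x hx
        have hfx : ∀ n : ℕ, |f x| < 1/(n+1) := by
          intro n
          by_contra hcon
          exact hUB n (mem_iInter.1 hx n) (not_lt.1 hcon)
        have : f x = 0 := by
          by_contra hne
          have habs : 0 < |f x| := abs_pos.2 hne
          obtain ⟨n, hn⟩ := exists_nat_one_div_lt habs
          exact absurd (hfx n) (not_lt.2 (le_of_lt (by exact_mod_cast hn)))
        rw [hAeq]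
        exact this
    exact ⟨fun _ => A, fun _ => ⟨U, hUclopen, hAeqI⟩, (iUnion_const A).symm⟩
end

section
/- Let X be a topological space and Y a metrizable space. Then every mapping f : X → Y of the first Baire class (a pointwise limit of continuous maps X → Y) has a base consisting of zero sets which is a countable union of strongly functionally discrete families; that is, B₁(X,Y) ⊆ Σ₀^f(X,Y). -/
open Set Filter Topology

section Helpers

variable {X : Type*} [TopologicalSpace X]

lemma isZeroSet_univ : IsZeroSet (Set.univ : Set X) :=
  ⟨fun _ => 0, continuous_const, by ext x; simp⟩

lemma isZeroSet_le {φ : X → ℝ} (hφ : Continuous φ) (c : ℝ) :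
    IsZeroSet {x | φ x ≤ c} := by
  refine ⟨fun x => max (φ x - c) 0, (hφ.sub continuous_const).max continuous_const, ?_⟩
  ext x
  simp [max_eq_right_iff, sub_nonpos]

lemma isZeroSet_ge {φ : X → ℝ} (hφ : Continuous φ) (c : ℝ) :
    IsZeroSet {x | c ≤ φ x} := by
  have h := isZeroSet_le (X := X) (φ := fun x => c - φ x) (continuous_const.sub hφ) 0
  convert h using 2 with x
  simp [sub_nonpos]

lemma isCozeroSet_lt {φ : X → ℝ} (hφ : Continuous φ) (c : ℝ) :
    IsCozeroSet {x | c < φ x} := by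
  have h : {x | c < φ x}ᶜ = {x | φ x ≤ c} := by ext x; simp [not_lt]
  rw [IsCozeroSet, h]
  exact isZeroSet_le hφ c

lemma isZeroSet_iInter {F : ℕ → Set X} (h : ∀ n, IsZeroSet (F n)) :
    IsZeroSet (⋂ n, F n) := by
  choose f hf hFf using h
  set g : ℕ → X → ℝ := fun n x => (1 / 2 : ℝ) ^ n * min |f n x| 1 with hg
  have hgc : ∀ n, Continuous (g n) := fun n =>
    continuous_const.mul (((hf n).abs).min continuous_const)
  have hgnonneg : ∀ n x, 0 ≤ g n x := fun n x => by
    apply mul_nonneg (by positivity)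
    exact le_min (abs_nonneg _) zero_le_one
  have hgle : ∀ n x, ‖g n x‖ ≤ (1 / 2 : ℝ) ^ n := by
    intro n x
    rw [Real.norm_eq_abs, abs_of_nonneg (hgnonneg n x)]
    calc (1 / 2 : ℝ) ^ n * min |f n x| 1 ≤ (1 / 2 : ℝ) ^ n * 1 := by
          apply mul_le_mul_of_nonneg_left (min_le_right _ _) (by positivity)
      _ = (1 / 2 : ℝ) ^ n := mul_one _
  have hsum : Summable (fun n => (1 / 2 : ℝ) ^ n) :=
    summable_geometric_of_lt_one (by norm_num) (by norm_num)
  have hH : Continuous fun x => ∑' n, g n x := continuous_tsum hgc hsum hgle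
  refine ⟨_, hH, ?_⟩
  ext x
  have hsx : Summable fun n => g n x :=
    Summable.of_nonneg_of_le (hgnonneg · x) (fun n => by
      simpa [Real.norm_eq_abs, abs_of_nonneg (hgnonneg n x)] using hgle n x) hsum
  simp only [Set.mem_iInter, Set.mem_preimage, Set.mem_singleton_iff]
  constructor
  · intro hx
    have : ∀ n, g n x = 0 := by
      intro n
      have hxn : x ∈ F n := hx n
      rw [hFf n] at hxn
      simp only [Set.mem_preimage, Set.mem_singleton_iff] at hxn
      simp [hg, hxn]
    calc ∑' n, g n x = ∑' _ : ℕ, (0:ℝ) := tsum_congr this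
      _ = 0 := tsum_zero
  · intro hx n
    have hle : g n x ≤ ∑' m, g m x := Summable.le_tsum hsx n (fun m _ => hgnonneg m x)
    rw [hx] at hle
    have hz : g n x = 0 := le_antisymm hle (hgnonneg n x)
    rw [hg] at hz
    have h2 : min |f n x| 1 = 0 := by
      rcases mul_eq_zero.mp hz with hz' | hz'
      · exfalso; exact absurd hz' (by positivity)
      · exact hz' 
    have habs : |f n x| = 0 := by
      rcases le_total (|f n x|) 1 with hle1 | hle1
      · rwa [min_eq_left hle1] at h2
      · rw [min_eq_right hle1] at h2; norm_num at h2
    rw [hFf n]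
    simpa using abs_eq_zero.mp habs

lemma IsDiscreteFamily.mono {ι : Type*} {U W : ι → Set X}
    (h : IsDiscreteFamily U) (hW : ∀ i, W i ⊆ U i) : IsDiscreteFamily W := by
  intro x
  obtain ⟨V, hV, hs⟩ := h x
  exact ⟨V, hV, fun i hi j hj =>
    hs (hi.mono (Set.inter_subset_inter_left _ (hW i)))
       (hj.mono (Set.inter_subset_inter_left _ (hW j)))⟩

lemma IsDiscreteFamily.comp_inj {ι κ : Type*} {U : ι → Set X}
    (h : IsDiscreteFamily U) {e : κ → ι} (he : Function.Injective e) :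
    IsDiscreteFamily (fun k => U (e k)) := by
  intro x
  obtain ⟨V, hV, hs⟩ := h x
  exact ⟨V, hV, fun k hk k' hk' => he (hs hk hk')⟩

lemma IsDiscreteFamily.preimage {Y : Type*} [TopologicalSpace Y] {g : X → Y}
    (hg : Continuous g) {ι : Type*} {U : ι → Set Y} (h : IsDiscreteFamily U) :
    IsDiscreteFamily (fun i => g ⁻¹' U i) := by
  intro x
  obtain ⟨W, hW, hs⟩ := h (g x)
  refine ⟨g ⁻¹' W, hg.continuousAt.preimage_mem_nhds hW, ?_⟩
  intro i hi j hj
  refine hs ?_ ?_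
  · obtain ⟨z, hz1, hz2⟩ := hi; exact ⟨g z, hz1, hz2⟩
  · obtain ⟨z, hz1, hz2⟩ := hj; exact ⟨g z, hz1, hz2⟩

end Helpers
section SigmaDiscreteBase

open Metric

variable {Y : Type*} [MetricSpace Y]

noncomputable def Dset (r : Y → Y → Prop) (a : ℝ) (n : ℕ) (y : Y) : Set Y :=
  ⋃ x ∈ {x : Y | dist x y ≤ a - 3 * (1/2)^n ∧ (∀ z, r z y → a ≤ dist x z) ∧
      ∀ j, j < n → ∀ z, x ∉ Dset r a j z}, Metric.ball x ((1/2)^n)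
termination_by n

lemma mem_Dset {r : Y → Y → Prop} {a : ℝ} {n : ℕ} {y u : Y} :
    u ∈ Dset r a n y ↔ ∃ x : Y, (dist x y ≤ a - 3 * (1/2)^n ∧ (∀ z, r z y → a ≤ dist x z) ∧
      ∀ j, j < n → ∀ z, x ∉ Dset r a j z) ∧ u ∈ Metric.ball x ((1/2)^n) := by
  rw [Dset]
  simp only [Set.mem_iUnion, Set.mem_setOf_eq, exists_prop]

lemma isOpen_Dset (r : Y → Y → Prop) (a : ℝ) (n : ℕ) (y : Y) : IsOpen (Dset r a n y) := by
  rw [Dset]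
  exact isOpen_biUnion fun x _ => Metric.isOpen_ball

lemma Dset_subset_ball {r : Y → Y → Prop} {a : ℝ} {n : ℕ} {y : Y} :
    Dset r a n y ⊆ Metric.ball y a := by
  intro u hu
  obtain ⟨x, ⟨h1, -, -⟩, hx⟩ := mem_Dset.mp hu
  have hb : (0:ℝ) < (1/2)^n := by positivity
  rw [Metric.mem_ball] at hx ⊢
  calc dist u y ≤ dist u x + dist x y := dist_triangle _ _ _
    _ < (1/2)^n + (a - 3 * (1/2)^n) := add_lt_add_of_lt_of_le hx h1
    _ ≤ a := by linarith

lemma Dset_sep {r : Y → Y → Prop} [IsTrichotomous Y r] {a : ℝ} {n : ℕ} {y y' : Y}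
    (hyy' : y ≠ y') {u u' : Y} (hu : u ∈ Dset r a n y) (hu' : u' ∈ Dset r a n y') :
    (1/2:ℝ)^n < dist u u' := by
  obtain ⟨x, ⟨h1, h2, -⟩, hx⟩ := mem_Dset.mp hu
  obtain ⟨x', ⟨h1', h2', -⟩, hx'⟩ := mem_Dset.mp hu'
  rw [Metric.mem_ball] at hx hx'
  have key : 3 * (1/2:ℝ)^n ≤ dist x x' := by
    rcases trichotomous_of r y y' with hr | he | hr
    · have ha : a ≤ dist x' y := h2' y hr
      have : dist x' y ≤ dist x' x + dist x y := dist_triangle _ _ _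
      rw [dist_comm x' x] at this
      linarith
    · exact absurd he hyy'
    · have ha : a ≤ dist x y' := h2 y' hr
      have : dist x y' ≤ dist x x' + dist x' y' := dist_triangle _ _ _
      linarith
  have h4 : dist x x' ≤ dist x u + dist u u' + dist u' x' := dist_triangle4 _ _ _ _
  have c1 : dist x u = dist u x := dist_comm _ _
  have c2 : dist u' x' = dist u' x' := rfl
  linarith

lemma Dset_cover {r : Y → Y → Prop} [IsWellOrder Y r] {a : ℝ} (ha : 0 < a) (p : Y) :
    ∃ n y, p ∈ Dset r a n y := by
  have wf : WellFounded r := IsWellFounded.wf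
  set S : Set Y := {y | dist p y < a} with hS
  have hSne : S.Nonempty := ⟨p, by simp [hS, ha]⟩
  set y₀ := wf.min S hSne with hy₀
  have hmem : dist p y₀ < a := wf.min_mem S hSne
  have hleast : ∀ z, r z y₀ → a ≤ dist p z := by
    intro z hz
    by_contra hlt
    exact wf.not_lt_min S (show z ∈ S from not_le.mp hlt) hz
  obtain ⟨n, hn⟩ : ∃ n : ℕ, (1/2:ℝ)^n < (a - dist p y₀)/3 :=
    exists_pow_lt_of_lt_one (by linarith) (by norm_num)
  by_cases h : ∃ j, j < n ∧ ∃ z, p ∈ Dset r a j z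
  · obtain ⟨j, -, z, hz⟩ := h
    exact ⟨j, z, hz⟩
  · push_neg at h
    refine ⟨n, y₀, mem_Dset.mpr ⟨p, ⟨by linarith, hleast, ?_⟩, Metric.mem_ball_self (by positivity)⟩⟩
    intro j hj z
    exact h j hj z

end SigmaDiscreteBase
section BaseExistence

open Metric

lemma exists_sigma_discrete_base (Y : Type*) [MetricSpace Y] :
    ∃ 𝒱 : ℕ → Set (Set Y),
      (∀ k, ∀ V ∈ 𝒱 k, IsOpen V) ∧
      (∀ k, IsDiscreteFamily (fun B : 𝒱 k => (B : Set Y))) ∧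
      (∀ U : Set Y, IsOpen U → ∀ p ∈ U, ∃ k, ∃ V ∈ 𝒱 k, p ∈ V ∧ V ⊆ U) := by
  classical
  set r : Y → Y → Prop := WellOrderingRel with hr
  haveI : IsWellOrder Y r := WellOrderingRel.isWellOrder
  set e : ℕ ≃ ℕ × ℕ := (Denumerable.eqv (ℕ × ℕ)).symm with he
  refine ⟨fun k => {A | ∃ y : Y, A = Dset r ((1/2)^(e k).1) (e k).2 y}, ?_, ?_, ?_⟩
  · rintro k V ⟨y, rfl⟩
    exact isOpen_Dset _ _ _ _
  · intro k p
    set n := (e k).2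
    refine ⟨Metric.ball p ((1/2)^n / 2), Metric.ball_mem_nhds p (by positivity), ?_⟩
    rintro ⟨A, hA⟩ ⟨u, huA, huV⟩ ⟨A', hA'⟩ ⟨u', huA', huV'⟩
    obtain ⟨y, rfl⟩ := hA
    obtain ⟨y', rfl⟩ := hA'
    by_cases hyy' : y = y'
    · subst hyy'; rfl
    · exfalso
      have hsep := Dset_sep (r := r) hyy' huA huA'
      rw [Metric.mem_ball] at huV huV'
      have : dist u u' ≤ dist u p + dist p u' := dist_triangle _ _ _
      rw [dist_comm p u'] at this
      linarith
  · intro U hU p hp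
    obtain ⟨ε, hε, hball⟩ := Metric.isOpen_iff.mp hU p hp
    obtain ⟨m, hm⟩ : ∃ m : ℕ, (1/2:ℝ)^m < ε/2 :=
      exists_pow_lt_of_lt_one (by linarith) (by norm_num)
    set a : ℝ := (1/2)^m with ha
    obtain ⟨n, y, hpD⟩ := Dset_cover (r := r) (a := a) (by positivity) p
    refine ⟨e.symm (m, n), Dset r a n y, ⟨y, ?_⟩, hpD, ?_⟩
    · rw [Equiv.apply_symm_apply]
    · intro q hq
      apply hball
      have hqy : dist q y < a := Dset_subset_ball hq
      have hpy : dist p y < a := Dset_subset_ball hpD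
      rw [Metric.mem_ball] at *
      have : dist q p ≤ dist q y + dist y p := dist_triangle _ _ _
      rw [dist_comm y p] at this
      linarith

end BaseExistence
theorem stmt8 {X Y : Type*} [TopologicalSpace X] [TopologicalSpace Y]
    [TopologicalSpace.MetrizableSpace Y] (f : X → Y) (hf : MemB1 f) :
    MemSigmaF0 f := by
  classical
  obtain ⟨g, hgc, hgl⟩ := hf
  letI : MetricSpace Y := TopologicalSpace.metrizableSpaceMetric Y
  obtain ⟨𝒱, h𝒱open, h𝒱disc, h𝒱base⟩ := exists_sigma_discrete_base Y
  set c : ℕ → ℝ := fun k => 1 / ((k : ℝ) + 1) with hc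
  have hcpos : ∀ k, 0 < c k := fun k => by positivity
  set φ : ℕ → Set Y → X → ℝ := fun n V x => Metric.infDist (g n x) Vᶜ with hφ
  have hφc : ∀ n V, Continuous (φ n V) :=
    fun n V => (Metric.continuous_infDist_pt Vᶜ).comp (hgc n)
  set Z : Set Y → ℕ → ℕ → Set X := fun V k n => {x | ∀ j, n ≤ j → c k ≤ φ j V x} with hZdef
  have hZzero : ∀ V k n, IsZeroSet (Z V k n) := by
    intro V k n
    have hrw : Z V k n = ⋂ j : ℕ, (if n ≤ j then {x | c k ≤ φ j V x} else Set.univ) := by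
      ext x
      simp only [hZdef, Set.mem_setOf_eq, Set.mem_iInter]
      constructor
      · intro h j
        split_ifs with hj
        · exact h j hj
        · trivial
      · intro h j hj
        have := h j
        rwa [if_pos hj] at this
    rw [hrw]
    apply isZeroSet_iInter
    intro j
    split_ifs with hj
    · exact isZeroSet_ge (hφc j V) (c k)
    · exact isZeroSet_univ
  have hZsub : ∀ V k n, Z V k n ⊆ f ⁻¹' V := by
    intro V k n x hx
    have hT : Tendsto (fun j => φ j V x) atTop (𝓝 (Metric.infDist (f x) Vᶜ)) :=
      ((Metric.continuous_infDist_pt Vᶜ).tendsto (f x)).comp (hgl x)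
    have hge : c k ≤ Metric.infDist (f x) Vᶜ :=
      ge_of_tendsto hT (eventually_atTop.mpr ⟨n, fun j hj => hx j hj⟩)
    have hnotmem : f x ∉ Vᶜ := by
      intro hmem
      have h0 := Metric.infDist_zero_of_mem hmem
      have := hcpos k
      rw [h0] at hge
      linarith
    simpa using hnotmem
  set e3 : ℕ ≃ ℕ × ℕ × ℕ := (Denumerable.eqv (ℕ × ℕ × ℕ)).symm with he3
  refine ⟨fun i => match i with
    | 0 => ({Set.univ} : Set (Set X))
    | Nat.succ i' => {A | ∃ V ∈ 𝒱 (e3 i').1, A = Z V (e3 i').2.1 (e3 i').2.2}, ?_, ?_, ?_⟩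
  · -- SFD
    intro i
    match i with
    | 0 =>
      refine ⟨fun _ => Set.univ, ?_, ?_, fun _ => Set.subset_univ _⟩
      · intro x
        refine ⟨Set.univ, Filter.univ_mem, ?_⟩
        intro a _ b _
        exact Subtype.ext (a.2.trans b.2.symm)
      · intro _
        refine ⟨fun _ => 1, continuous_const, ?_⟩
        rw [Set.compl_univ]
        ext x; simp
    | Nat.succ i' =>
      set m := (e3 i').1 with hm
      set k := (e3 i').2.1 with hk
      set n := (e3 i').2.2 with hn
      set 𝓐 : Set (Set X) := {A | ∃ V ∈ 𝒱 m, A = Z V k n} with h𝓐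
      show IsSFDFamily (fun A : 𝓐 => (A : Set X))
      have hsel : ∀ A : 𝓐, ∃ V, V ∈ 𝒱 m ∧ (A : Set X) = Z V k n := fun A => by
        obtain ⟨V, hV1, hV2⟩ := A.2
        exact ⟨V, hV1, hV2⟩
      set sel : 𝓐 → 𝒱 m := fun A => ⟨(hsel A).choose, (hsel A).choose_spec.1⟩ with hseldef
      have hselZ : ∀ A : 𝓐, (A : Set X) = Z (sel A) k n := fun A => (hsel A).choose_spec.2
      have hselinj : Function.Injective sel := by
        intro A A' hAA'
        apply Subtype.ext
        rw [hselZ A, hselZ A', hAA']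
      set Yfam : 𝒱 m → Set Y := fun B => {y | c k / 2 < Metric.infDist y (↑B : Set Y)ᶜ}
        with hYfam
      have hYdisc : IsDiscreteFamily Yfam := by
        refine (h𝒱disc m).mono ?_
        intro B y hy
        simp only [hYfam, Set.mem_setOf_eq] at hy
        by_contra hmem
        have h0 := Metric.infDist_zero_of_mem (Set.mem_compl hmem)
        rw [h0] at hy
        have := hcpos k
        linarith
      have hXdisc : IsDiscreteFamily (fun B : 𝒱 m => g n ⁻¹' Yfam B) :=
        IsDiscreteFamily.preimage (hgc n) hYdisc
      refine ⟨fun A => g n ⁻¹' Yfam (sel A), hXdisc.comp_inj hselinj, ?_, ?_⟩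
      · intro A
        show IsCozeroSet {x | c k / 2 < φ n (↑(sel A) : Set Y) x}
        exact isCozeroSet_lt (hφc n _) (c k / 2)
      · intro A
        have hclosed : IsClosed {x | c k ≤ φ n (↑(sel A) : Set Y) x} :=
          isClosed_le continuous_const (hφc n _)
        have hsub1 : (A : Set X) ⊆ {x | c k ≤ φ n (↑(sel A) : Set Y) x} := by
          rw [hselZ A]
          intro x hx
          exact hx n le_rfl
        refine (closure_minimal hsub1 hclosed).trans ?_
        intro x hx
        simp only [Set.mem_setOf_eq] at hx
        show c k / 2 < φ n (↑(sel A) : Set Y) x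
        have := hcpos k
        linarith
  · -- zero sets
    intro i
    match i with
    | 0 =>
      intro A hA
      rw [Set.mem_singleton_iff] at hA
      rw [hA]
      exact isZeroSet_univ
    | Nat.succ i' =>
      rintro A ⟨V, -, rfl⟩
      exact hZzero _ _ _
  · -- base
    intro V hV
    refine ⟨{A | (A ∈ ⋃ i, (match i with
      | 0 => ({Set.univ} : Set (Set X))
      | Nat.succ i' => {A | ∃ V ∈ 𝒱 (e3 i').1, A = Z V (e3 i').2.1 (e3 i').2.2})) ∧
      A ⊆ f ⁻¹' V}, fun A hA => hA.1, ?_⟩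
    apply Set.Subset.antisymm
    · intro x hx
      obtain ⟨a, V', hV'mem, hxV', hV'V⟩ := h𝒱base V hV (f x) hx
      by_cases hV'univ : V' = Set.univ
      · refine ⟨Set.univ, ⟨Set.mem_iUnion.mpr ⟨0, rfl⟩, ?_⟩, trivial⟩
        intro x' _
        apply hV'V
        rw [hV'univ]
        trivial
      · have hne : (V'ᶜ : Set Y).Nonempty := Set.nonempty_compl.mpr hV'univ
        have hcl : IsClosed (V'ᶜ : Set Y) := (h𝒱open a V' hV'mem).isClosed_compl
        set δ := Metric.infDist (f x) V'ᶜ with hδdef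
        have hδpos : 0 < δ := by
          rcases lt_or_eq_of_le (Metric.infDist_nonneg (x := f x) (s := V'ᶜ)) with h | h
          · exact h
          · exfalso
            have := (hcl.mem_iff_infDist_zero hne).mpr h.symm
            exact this hxV'
        obtain ⟨k, hk⟩ : ∃ k : ℕ, 1 / ((k : ℝ) + 1) < δ / 3 :=
          exists_nat_one_div_lt (by linarith)
        obtain ⟨N, hN⟩ := (Metric.tendsto_atTop.mp (hgl x)) (δ / 3) (by linarith)
        refine ⟨Z V' k N, ⟨Set.mem_iUnion.mpr ⟨(e3.symm (a, k, N)) + 1, ?_⟩, ?_⟩, ?_⟩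
        · show Z V' k N ∈ {A | ∃ W ∈ 𝒱 (e3 (e3.symm (a,k,N))).1,
            A = Z W (e3 (e3.symm (a,k,N))).2.1 (e3 (e3.symm (a,k,N))).2.2}
          rw [Equiv.apply_symm_apply]
          exact ⟨V', hV'mem, rfl⟩
        · exact (hZsub V' k N).trans (Set.preimage_mono hV'V)
        · intro j hj
          have h1 : δ ≤ Metric.infDist (g j x) V'ᶜ + dist (f x) (g j x) :=
            Metric.infDist_le_infDist_add_dist
          have h2 : dist (f x) (g j x) < δ / 3 := by
            rw [dist_comm]
            exact hN j hj
          show c k ≤ φ j V' x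
          have : c k < δ / 3 := hk
          simp only [hφ]
          linarith
    · rintro x ⟨A, ⟨-, hAsub⟩, hxA⟩
      exact hAsub hxA
end

section
/- Let X be the space of irrational numbers with the Euclidean topology and Y the set of irrational numbers with the topology inherited from the Sorgenfrey line. Fix an enumeration Q = {q_n : n ∈ ℕ} of a countable dense subset of X, and define f : X → Y by f(q_n) = q_n − 1/n and f(x) = x for x ∉ Q. Then the preimage under f of every open subset of Y is an F_σ-set in X, but f is not a pointwise limit of any sequence of continuous maps from X to Y. -/
open Set Filter Topology

noncomputable def sorgenfreyIrr : TopologicalSpace {x : ℝ // Irrational x} :=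
  TopologicalSpace.induced Subtype.val
    (TopologicalSpace.generateFrom {s : Set ℝ | ∃ a b : ℝ, s = Set.Ico a b})


lemma genOpen_ico {W : Set ℝ}
    (h : TopologicalSpace.GenerateOpen {s : Set ℝ | ∃ a b : ℝ, s = Set.Ico a b} W) :
    ∀ x ∈ W, ∃ b, x < b ∧ Ico x b ⊆ W := by
  induction h with
  | basic s hs =>
    obtain ⟨a, b, rfl⟩ := hs
    intro x hx
    exact ⟨b, hx.2, fun y hy => ⟨le_trans hx.1 hy.1, hy.2⟩⟩
  | univ => exact fun x _ => ⟨x + 1, lt_add_one x, fun y _ => trivial⟩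
  | inter s t _ _ ihs iht =>
    intro x hx
    obtain ⟨b1, hb1, hsub1⟩ := ihs x hx.1
    obtain ⟨b2, hb2, hsub2⟩ := iht x hx.2
    exact ⟨min b1 b2, lt_min hb1 hb2,
      fun y hy => ⟨hsub1 ⟨hy.1, hy.2.trans_le (min_le_left _ _)⟩,
        hsub2 ⟨hy.1, hy.2.trans_le (min_le_right _ _)⟩⟩⟩
  | sUnion S _ ih =>
    intro x hx
    obtain ⟨s, hsS, hxs⟩ := hx
    obtain ⟨b, hb, hsub⟩ := ih s hsS x hxs
    exact ⟨b, hb, hsub.trans (subset_sUnion_of_mem hsS)⟩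

lemma sorg_basic (a b : ℝ) :
    IsOpen[sorgenfreyIrr] {y : {x : ℝ // Irrational x} | (y : ℝ) ∈ Ico a b} := by
  exact ⟨Ico a b, TopologicalSpace.GenerateOpen.basic _ ⟨a, b, rfl⟩, rfl⟩

lemma sorg_exists_Ico {V : Set {x : ℝ // Irrational x}} (hV : IsOpen[sorgenfreyIrr] V)
    {x : {x : ℝ // Irrational x}} (hx : x ∈ V) :
    ∃ b, (x : ℝ) < b ∧ ∀ y : ℝ, (x : ℝ) ≤ y → y < b → ∀ hy : Irrational y,
      (⟨y, hy⟩ : {x : ℝ // Irrational x}) ∈ V := by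
  obtain ⟨W, hW, rfl⟩ := hV
  obtain ⟨b, hb, hsub⟩ := genOpen_ico hW (x : ℝ) hx
  exact ⟨b, hb, fun y h1 h2 hy => hsub ⟨h1, h2⟩⟩

lemma sorg_le : sorgenfreyIrr ≤ (instTopologicalSpaceSubtype :
    TopologicalSpace {x : ℝ // Irrational x}) := by
  have h : TopologicalSpace.generateFrom {s : Set ℝ | ∃ a b : ℝ, s = Set.Ico a b} ≤
      (inferInstance : TopologicalSpace ℝ) := by
    rw [TopologicalSpace.le_def]
    intro U hU
    have key : U = ⋃₀ {s : Set ℝ | (∃ a b : ℝ, s = Set.Ico a b) ∧ s ⊆ U} := by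
      apply Subset.antisymm
      · intro x hx
        obtain ⟨ε, hε, hball⟩ := Metric.isOpen_iff.mp hU x hx
        refine ⟨Ico x (x + ε), ⟨⟨x, x + ε, rfl⟩, fun y hy => hball ?_⟩,
          le_refl x, by linarith⟩
        rw [Real.ball_eq_Ioo]
        exact ⟨by linarith [hy.1], hy.2⟩
      · rintro x ⟨s, ⟨_, hsU⟩, hxs⟩
        exact hsU hxs
      
    rw [key]
    exact TopologicalSpace.GenerateOpen.sUnion _
      (fun s hs => TopologicalSpace.GenerateOpen.basic _ hs.1)
  exact induced_mono h

lemma part2 (q : ℕ → {x : ℝ // Irrational x})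
    (hd : DenseRange q) (f : {x : ℝ // Irrational x} → {x : ℝ // Irrational x})
    (hf1 : ∀ n : ℕ, (f (q n) : ℝ) = (q n : ℝ) - 1 / (n + 1))
    (hf2 : ∀ x, x ∉ Set.range q → f x = x) :
    ¬ ∃ g : ℕ → {x : ℝ // Irrational x} → {x : ℝ // Irrational x},
        (∀ n, Continuous[instTopologicalSpaceSubtype, sorgenfreyIrr] (g n)) ∧
        ∀ x, Filter.Tendsto (fun n => g n x) Filter.atTop (@nhds _ sorgenfreyIrr (f x)) := by
  rintro ⟨g, hgc, hgt⟩
  have hid : Continuous[sorgenfreyIrr, instTopologicalSpaceSubtype]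
      (id : {x : ℝ // Irrational x} → {x : ℝ // Irrational x}) :=
    continuous_id_iff_le.mpr sorg_le
  have hgc' : ∀ n, Continuous (g n) := fun n =>
    @Continuous.comp _ _ _ instTopologicalSpaceSubtype sorgenfreyIrr
      instTopologicalSpaceSubtype (g n) id hid (hgc n)
  have hval : ∀ n, Continuous (fun x : {x : ℝ // Irrational x} => (g n x : ℝ)) :=
    fun n => continuous_subtype_val.comp (hgc' n)
  set H : ℕ → Set {x : ℝ // Irrational x} :=
    fun n => {x | ∀ m, n ≤ m → (x : ℝ) ≤ (g m x : ℝ)} with hH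
  have hHc : ∀ n, IsClosed (H n) := by
    intro n
    have : H n = ⋂ m, ⋂ _ : n ≤ m, {x : {x : ℝ // Irrational x} | (x : ℝ) ≤ (g m x : ℝ)} := by
      ext x; simp [hH]
    rw [this]
    exact isClosed_iInter fun m => isClosed_iInter fun _ =>
      isClosed_le continuous_subtype_val (hval m)
  have hcov : ∀ x, x ∉ Set.range q → ∃ n, x ∈ H n := by
    intro x hx
    have hfx : f x = x := hf2 x hx
    have hopen := sorg_basic (x : ℝ) ((x : ℝ) + 1)
    have hmem : f x ∈ {y : {x : ℝ // Irrational x} | (y : ℝ) ∈ Ico (x : ℝ) ((x : ℝ) + 1)} := by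
      rw [hfx]; exact ⟨le_refl _, lt_add_one _⟩
    have hnb := @IsOpen.mem_nhds _ sorgenfreyIrr _ _ hopen hmem
    have hev := (hgt x).eventually_mem hnb
    rw [eventually_atTop] at hev
    obtain ⟨n, hn⟩ := hev
    exact ⟨n, fun m hm => (hn m hm).1⟩
  have hHC : ∀ n, ∃ C : Set ℝ, IsClosed C ∧ Subtype.val ⁻¹' C = H n :=
    fun n => isClosed_induced_iff.mp (hHc n)
  choose C hCcl hCH using hHC
  set T : ℕ ⊕ (ℚ ⊕ ℕ) → Set ℝ :=
    Sum.elim C (Sum.elim (fun r : ℚ => {(r : ℝ)}) (fun n => {(q n : ℝ)})) with hT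
  have hTc : ∀ i, IsClosed (T i) := by
    rintro (n | r | n)
    · exact hCcl n
    · exact isClosed_singleton
    · exact isClosed_singleton
  have hTU : ⋃ i, T i = univ := by
    apply eq_univ_of_forall
    intro x
    by_cases hx : Irrational x
    · by_cases hxq : (⟨x, hx⟩ : {x : ℝ // Irrational x}) ∈ Set.range q
      · obtain ⟨n, hn⟩ := hxq
        exact mem_iUnion.mpr ⟨Sum.inr (Sum.inr n), by simp [hT, hn]⟩
      · obtain ⟨n, hn⟩ := hcov _ hxq
        refine mem_iUnion.mpr ⟨Sum.inl n, ?_⟩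
        rw [← hCH n] at hn
        exact hn
    · rw [Irrational, not_not] at hx
      obtain ⟨r, hr⟩ := hx
      exact mem_iUnion.mpr ⟨Sum.inr (Sum.inl r), by simp [hT, hr]⟩
  obtain ⟨i, hi⟩ := nonempty_interior_of_iUnion_of_closed hTc hTU
  rcases i with n | r | n
  rotate_left
  · rw [show T (Sum.inr (Sum.inl r)) = {(r : ℝ)} from rfl, interior_singleton] at hi
    exact hi.ne_empty rfl
  · rw [show T (Sum.inr (Sum.inr n)) = {(q n : ℝ)} from rfl, interior_singleton] at hi
    exact hi.ne_empty rfl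
  obtain ⟨x₀, hx₀⟩ := hi
  obtain ⟨ε, hε, hball⟩ := Metric.isOpen_iff.mp isOpen_interior x₀ hx₀
  have hballC : Metric.ball x₀ ε ⊆ C n := hball.trans (interior_subset)
  have hWo : IsOpen (Subtype.val ⁻¹' Metric.ball x₀ ε :
      Set {x : ℝ // Irrational x}) := Metric.isOpen_ball.preimage continuous_subtype_val
  have hWne : (Subtype.val ⁻¹' Metric.ball x₀ ε :
      Set {x : ℝ // Irrational x}).Nonempty := by
    obtain ⟨y, hy, hyb⟩ := dense_irrational.exists_mem_open Metric.isOpen_ball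
      ⟨x₀, Metric.mem_ball_self hε⟩
    exact ⟨⟨y, hy⟩, hyb⟩
  obtain ⟨k, hk⟩ := hd.exists_mem_open hWo hWne
  have hkH : q k ∈ H n := by
    rw [← hCH n]
    exact hballC hk
  -- contradiction at q k
  have hκ : (0 : ℝ) < 1 / (k + 1) := by positivity
  have hopen := sorg_basic ((q k : ℝ) - 1 / (k + 1)) (q k : ℝ)
  have hmem : f (q k) ∈ {y : {x : ℝ // Irrational x} |
      (y : ℝ) ∈ Ico ((q k : ℝ) - 1 / (k + 1)) (q k : ℝ)} := by
    rw [mem_setOf_eq, hf1 k]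
    exact ⟨le_refl _, by linarith⟩
  have hnb := @IsOpen.mem_nhds _ sorgenfreyIrr _ _ hopen hmem
  have hev := (hgt (q k)).eventually_mem hnb
  rw [eventually_atTop] at hev
  obtain ⟨n₀, hn₀⟩ := hev
  have h1 := (hn₀ (max n n₀) (le_max_right _ _)).2
  have h2 := hkH (max n n₀) (le_max_left _ _)
  change ((g (max n n₀) (q k) : ℝ)) < (q k : ℝ) at h1
  linarith

lemma countable_union_closed {D : Set {x : ℝ // Irrational x}} (hD : D.Countable) :
    ∃ G : ℕ → Set {x : ℝ // Irrational x}, (∀ n, IsClosed (G n)) ∧ D = ⋃ n, G n := by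
  rcases D.eq_empty_or_nonempty with h | h
  · exact ⟨fun _ => ∅, fun _ => isClosed_empty, by simp [h]⟩
  · obtain ⟨d, rfl⟩ := hD.exists_eq_range h
    exact ⟨fun n => {d n}, fun _ => isClosed_singleton, range_eq_iUnion d⟩

lemma part1 (q : ℕ → {x : ℝ // Irrational x})
    (f : {x : ℝ // Irrational x} → {x : ℝ // Irrational x})
    (hf1 : ∀ n : ℕ, (f (q n) : ℝ) = (q n : ℝ) - 1 / (n + 1))
    (hf2 : ∀ x, x ∉ Set.range q → f x = x)
    (V : Set {x : ℝ // Irrational x}) (hV : IsOpen[sorgenfreyIrr] V) :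
    ∃ F : ℕ → Set {x : ℝ // Irrational x}, (∀ n, IsClosed (F n)) ∧
      f ⁻¹' V = ⋃ n, F n := by
  classical
  set P := f ⁻¹' V with hP
  set U : Set ℝ := {t | ∃ δ > 0, ∀ y : ℝ, |y - t| < δ → ∀ hy : Irrational y,
    (⟨y, hy⟩ : {x : ℝ // Irrational x}) ∈ V} with hU
  have hUV : ∀ (t : ℝ) (ht : Irrational t), t ∈ U →
      (⟨t, ht⟩ : {x : ℝ // Irrational x}) ∈ V := by
    rintro t ht ⟨δ, hδ, h⟩
    exact h t (by simpa using hδ) ht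
  set S : ℕ → ℕ → Set {x : ℝ // Irrational x} := fun m k =>
    {x | (∀ t : ℝ, t ∉ U → 1 / (m + 1) ≤ |t - (x : ℝ)|) ∧
      ∀ j ≤ m, q j ∈ P ∨ 1 / (k + 1) ≤ |(q j : ℝ) - (x : ℝ)|} with hS
  have hSc : ∀ m k, IsClosed (S m k) := by
    intro m k
    have : S m k = (⋂ t ∈ Uᶜ, {x : {x : ℝ // Irrational x} | 1 / (m + 1) ≤ |t - (x : ℝ)|}) ∩
        ⋂ j ∈ Iic m, {x : {x : ℝ // Irrational x} |
          q j ∈ P ∨ 1 / (k + 1) ≤ |(q j : ℝ) - (x : ℝ)|} := by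
      ext x
      simp [hS, mem_iInter]
    rw [this]
    refine IsClosed.inter (isClosed_biInter fun t _ => ?_) (isClosed_biInter fun j _ => ?_)
    · exact isClosed_le continuous_const ((continuous_const.sub continuous_subtype_val).abs)
    · by_cases hj : q j ∈ P
      · simp only [hj, true_or, setOf_true]
        exact isClosed_univ
      · simp only [hj, false_or]
        exact isClosed_le continuous_const ((continuous_const.sub continuous_subtype_val).abs)
  have hSP : ∀ m k, S m k ⊆ P := by
    rintro m k x ⟨hA, hC⟩
    by_cases hx : x ∈ Set.range q
    · obtain ⟨n, rfl⟩ := hx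
      by_cases hnm : n ≤ m
      · rcases hC n hnm with h | h
        · exact h
        · exfalso
          simp only [sub_self, abs_zero] at h
          have : (0:ℝ) < 1 / (k + 1) := by positivity
          linarith
      · push_neg at hnm
        set y := (q n : ℝ) - 1 / (n + 1) with hy
        have hyirr : Irrational y := by
          have := Irrational.sub_ratCast (q := (1 / (n + 1) : ℚ)) (q n).2
          convert this using 2
          push_cast
          ring
        have hyU : y ∈ U := by
          by_contra hyU
          have h1 := hA y hyU
          have h2 : |y - (q n : ℝ)| = 1 / (n + 1) := by
            rw [hy]
            have : (0:ℝ) < 1 / (n + 1) := by positivity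
            rw [show (q n : ℝ) - 1 / (n + 1) - (q n : ℝ) = -(1 / (n + 1)) by ring,
              abs_neg, abs_of_pos this]
          rw [h2] at h1
          have h3 : (1 : ℝ) / (n + 1) < 1 / (m + 1) := by
            apply one_div_lt_one_div_of_lt (by positivity)
            have : (m : ℝ) < n := by exact_mod_cast hnm
            linarith
          linarith
        have hfy : f (q n) = ⟨y, hyirr⟩ := Subtype.ext (by rw [hf1 n])
        show f (q n) ∈ V
        rw [hfy]
        exact hUV y hyirr hyU
    · have hfx : f x = x := hf2 x hx
      have hxU : (x : ℝ) ∈ U := by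
        by_contra h
        have := hA x h
        simp only [sub_self, abs_zero] at this
        have h0 : (0:ℝ) < 1 / (m + 1) := by positivity
        linarith
      show f x ∈ V
      rw [hfx]
      have := hUV (x : ℝ) x.2 hxU
      simpa using this
  set L : Set {x : ℝ // Irrational x} := {x | x ∈ V ∧
    ¬ ∃ δ > 0, ∀ y : ℝ, (x : ℝ) - δ < y → y < (x : ℝ) → ∀ hy : Irrational y,
      (⟨y, hy⟩ : {x : ℝ // Irrational x}) ∈ V} with hL
  have hkey : ∀ x : {x : ℝ // Irrational x}, x ∈ L → ∃ r : ℚ, (x : ℝ) < r ∧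
      ∀ y : ℝ, (x : ℝ) ≤ y → y < r → ∀ hy : Irrational y,
        (⟨y, hy⟩ : {x : ℝ // Irrational x}) ∈ V := by
    intro x hx
    obtain ⟨b, hb, hsub⟩ := sorg_exists_Ico hV hx.1
    obtain ⟨r, hr1, hr2⟩ := exists_rat_btwn hb
    exact ⟨r, hr1, fun y h1 h2 hy => hsub y h1 (h2.trans hr2) hy⟩
  have hLc : L.Countable := by
    choose! r hr1 hr2 using hkey
    have main : ∀ x x' : {x : ℝ // Irrational x}, x ∈ L → x' ∈ L → r x = r x' →
        (x : ℝ) < (x' : ℝ) → False := by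
      intro x x' hx hx' hre hlt
      have hnot := hx'.2
      push_neg at hnot
      obtain ⟨y, hy1, hy2, hyirr, hyV⟩ := hnot ((x' : ℝ) - (x : ℝ)) (by linarith)
      apply hyV
      apply hr2 x hx y (by linarith) ?_ hyirr
      have h3 := hr1 x' hx'
      rw [← hre] at h3
      linarith
    rw [Set.countable_iff_exists_injOn]
    refine ⟨fun x => Encodable.encode (r x), ?_⟩
    intro x hx x' hx' he
    have hre : r x = r x' := Encodable.encode_injective he
    by_contra hne
    have hne' : (x : ℝ) ≠ (x' : ℝ) := fun h => hne (Subtype.ext h)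
    rcases hne'.lt_or_gt with h | h
    · exact main x x' hx hx' hre h
    · exact main x' x hx' hx hre.symm h
  have hD : (P ∩ (L ∪ Set.range q)).Countable :=
    Countable.mono inter_subset_right (hLc.union (countable_range q))
  have hcover : P = (⋃ m, ⋃ k, S m k) ∪ (P ∩ (L ∪ Set.range q)) := by
    apply Subset.antisymm
    · intro x hx
      by_cases hmem : x ∈ L ∪ Set.range q
      · exact Or.inr ⟨hx, hmem⟩
      · left
        rw [mem_union] at hmem
        obtain ⟨hxL, hxq⟩ := not_or.mp hmem
        have hfx : f x = x := hf2 x hxq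
        have hxV : x ∈ V := by rwa [hP, mem_preimage, hfx] at hx
        have hnL : ∃ δ > 0, ∀ y : ℝ, (x : ℝ) - δ < y → y < (x : ℝ) →
            ∀ hy : Irrational y, (⟨y, hy⟩ : {x : ℝ // Irrational x}) ∈ V := by
          by_contra hcon
          exact hxL ⟨hxV, hcon⟩
        obtain ⟨δ, hδ, hleft⟩ := hnL
        obtain ⟨b, hb, hright⟩ := sorg_exists_Ico hV hxV
        set ρ := min δ (b - (x : ℝ)) with hρdef
        have hρ : 0 < ρ := lt_min hδ (by linarith)
        have hball : ∀ t : ℝ, |t - (x : ℝ)| < ρ / 2 → t ∈ U := by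
          intro t ht
          refine ⟨ρ / 2, by positivity, ?_⟩
          intro y hyt hy
          have h1 : |y - (x : ℝ)| < ρ :=
            (abs_sub_le y t (x : ℝ)).trans_lt (by linarith)
          rw [abs_lt] at h1
          rcases le_or_gt (x : ℝ) y with h | h
          · refine hright y h ?_ hy
            have := min_le_right δ (b - (x : ℝ))
            linarith [h1.2]
          · refine hleft y ?_ h hy
            have := min_le_left δ (b - (x : ℝ))
            linarith [h1.1]
        obtain ⟨m, hm⟩ := exists_nat_one_div_lt (show (0:ℝ) < ρ / 2 by positivity)
        have hpos : ∀ j, (0 : ℝ) < |(q j : ℝ) - (x : ℝ)| := by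
          intro j
          rw [abs_pos, sub_ne_zero]
          intro h
          exact hxq ⟨j, Subtype.ext h⟩
        have hne : (Finset.range (m + 1)).Nonempty := ⟨0, Finset.mem_range.mpr (Nat.succ_pos m)⟩
        set c := (Finset.range (m + 1)).inf' hne (fun j => |(q j : ℝ) - (x : ℝ)|) with hcdef
        have hc : 0 < c := by
          rw [hcdef, Finset.lt_inf'_iff]
          exact fun j _ => hpos j
        obtain ⟨k, hk⟩ := exists_nat_one_div_lt hc
        refine mem_iUnion.mpr ⟨m, mem_iUnion.mpr ⟨k, ⟨?_, ?_⟩⟩⟩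
        · intro t htU
          by_contra hcon
          push_neg at hcon
          exact htU (hball t (hcon.trans hm))
        · intro j hj
          right
          have hle : c ≤ |(q j : ℝ) - (x : ℝ)| :=
            Finset.inf'_le _ (Finset.mem_range.mpr (Nat.lt_succ_of_le hj))
          linarith
    · rintro x (hx | hx)
      · obtain ⟨m, hm⟩ := mem_iUnion.mp hx
        obtain ⟨k, hk⟩ := mem_iUnion.mp hm
        exact hSP m k hk
      · exact hx.1
  obtain ⟨G, hGc, hGU⟩ := countable_union_closed hD
  refine ⟨fun n => S (Nat.unpair n).1 (Nat.unpair n).2 ∪ G n, fun n => (hSc _ _).union (hGc n), ?_⟩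
  have hSU : (⋃ n, S (Nat.unpair n).1 (Nat.unpair n).2) = ⋃ m, ⋃ k, S m k := by
    apply Subset.antisymm
    · exact iUnion_subset fun n =>
        subset_iUnion_of_subset (Nat.unpair n).1 (subset_iUnion_of_subset (Nat.unpair n).2 le_rfl)
    · refine iUnion_subset fun m => iUnion_subset fun k => ?_
      intro x hx
      refine mem_iUnion.mpr ⟨Nat.pair m k, ?_⟩
      rw [Nat.unpair_pair]
      exact hx
  rw [iUnion_union_distrib, hSU, ← hGU, ← hcover]

theorem stmt13 (q : ℕ → {x : ℝ // Irrational x}) (hq : Function.Injective q)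
    (hd : DenseRange q) (f : {x : ℝ // Irrational x} → {x : ℝ // Irrational x})
    (hf1 : ∀ n : ℕ, (f (q n) : ℝ) = (q n : ℝ) - 1 / (n + 1))
    (hf2 : ∀ x, x ∉ Set.range q → f x = x) :
    (∀ V : Set {x : ℝ // Irrational x}, IsOpen[sorgenfreyIrr] V →
      ∃ F : ℕ → Set {x : ℝ // Irrational x}, (∀ n, IsClosed (F n)) ∧
        f ⁻¹' V = ⋃ n, F n) ∧
    ¬ ∃ g : ℕ → {x : ℝ // Irrational x} → {x : ℝ // Irrational x},
        (∀ n, Continuous[instTopologicalSpaceSubtype, sorgenfreyIrr] (g n)) ∧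
        ∀ x, Filter.Tendsto (fun n => g n x) Filter.atTop (@nhds _ sorgenfreyIrr (f x)) := by
  constructor
  · intro V hV
    exact part1 q f hf1 hf2 V hV
  · exact part2 q hd f hf1 hf2
end
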